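/- (Time-shift property of the nonlocal derivative for nonincreasing kernels.) Let $T > 0$, $k \in H^1_1([0,T])$ nonnegative and nonincreasing, $\delta_1 \in (0,T)$, $W_0 \in \mathbb{R}$, and $W \in L_\infty([0,T])$ with $W(t) \ge W_0$ for a.a. $t \in (0,\delta_1)$. Define $\tilde W(s) = W(s + \delta_1)$ for $s \in (0, T - \delta_1)$. Then for almost all $s \in (0, T-\delta_1)$: $\frac{d}{ds}\big(k \ast [\tilde W - W_0]\big)(s) \ge \frac{d}{dt}\big(k \ast [W - W_0]\big)(s + \delta_1)$. -/

import Mathlib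

open MeasureTheory Real

noncomputable def conv (f g : ℝ → ℝ) (t : ℝ) : ℝ := ∫ τ in (0:ℝ)..t, f (t - τ) * g τ

open Set Filter in
lemma conv_integrable {k g : ℝ → ℝ} {T K0 M : ℝ}
    (kc : ContinuousOn k (Set.Icc 0 T)) (hkb : ∀ t ∈ Set.Icc (0:ℝ) T, |k t| ≤ K0)
    (hgmeas : Measurable g) (hgb : ∀ t ∈ Set.Icc (0:ℝ) T, |g t| ≤ M)
    {a b c : ℝ} (ha : 0 ≤ a) (hab : a ≤ b) (hbc : b ≤ c) (hcT : c ≤ T) :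
    IntervalIntegrable (fun τ => k (c - τ) * g τ) volume a b := by
  rw [intervalIntegrable_iff_integrableOn_Ioc_of_le hab]
  have hmaps : Set.MapsTo (fun τ => c - τ) (Set.Icc a b) (Set.Icc 0 T) := by
    intro τ hτ
    simp only [Set.mem_Icc] at hτ ⊢
    constructor <;> linarith [hτ.1, hτ.2]
  have hck : ContinuousOn (fun τ => k (c - τ)) (Set.Icc a b) :=
    kc.comp ((continuous_const.sub continuous_id).continuousOn) hmaps
  have hm1 : AEStronglyMeasurable (fun τ => k (c - τ)) (volume.restrict (Set.Ioc a b)) :=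
    (hck.aestronglyMeasurable measurableSet_Icc).mono_measure
      (Measure.restrict_mono Set.Ioc_subset_Icc_self le_rfl)
  have hm : AEStronglyMeasurable (fun τ => k (c - τ) * g τ) (volume.restrict (Set.Ioc a b)) :=
    hm1.mul hgmeas.aestronglyMeasurable
  refine Integrable.mono' (integrable_const (K0 * M)) hm ?_
  refine (ae_restrict_iff' measurableSet_Ioc).2 (Filter.Eventually.of_forall fun τ hτ => ?_)
  have hτ' : τ ∈ Set.Icc (0:ℝ) T := ⟨by linarith [hτ.1], by linarith [hτ.2]⟩
  have hcτ : c - τ ∈ Set.Icc (0:ℝ) T := ⟨by linarith [hτ.2], by linarith [hτ.1]⟩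
  calc ‖k (c - τ) * g τ‖ = |k (c - τ)| * |g τ| := by rw [norm_mul]; rfl
    _ ≤ K0 * M := mul_le_mul (hkb _ hcτ) (hgb _ hτ') (abs_nonneg _)
        (le_trans (abs_nonneg _) (hkb _ hcτ))

open Set Filter in
lemma conv_lip {k g : ℝ → ℝ} {T M : ℝ}
    (kc : ContinuousOn k (Set.Icc 0 T)) (hknn : ∀ t ∈ Set.Icc (0:ℝ) T, 0 ≤ k t)
    (hkmono : AntitoneOn k (Set.Icc 0 T))
    (hgmeas : Measurable g) (hM : 0 ≤ M) (hgb : ∀ t ∈ Set.Icc (0:ℝ) T, |g t| ≤ M)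
    {t₁ t₂ : ℝ} (h1 : t₁ ∈ Set.Icc (0:ℝ) T) (h2 : t₂ ∈ Set.Icc (0:ℝ) T) (h12 : t₁ ≤ t₂) :
    |conv k g t₂ - conv k g t₁| ≤ 2 * M * k 0 * (t₂ - t₁) := by
  obtain ⟨h1a, h1b⟩ := h1
  obtain ⟨h2a, h2b⟩ := h2
  have hT : (0:ℝ) ≤ T := le_trans h1a h1b
  have hkb : ∀ t ∈ Set.Icc (0:ℝ) T, |k t| ≤ k 0 := by
    intro t ht
    rw [abs_of_nonneg (hknn t ht)]
    exact hkmono (Set.left_mem_Icc.2 hT) ht ht.1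
  have hk0 : 0 ≤ k 0 := hknn 0 (Set.left_mem_Icc.2 hT)
  -- integrabilities
  have I1 : IntervalIntegrable (fun τ => k (t₂ - τ) * g τ) volume 0 t₁ :=
    conv_integrable kc hkb hgmeas hgb le_rfl h1a h12 h2b
  have I2 : IntervalIntegrable (fun τ => k (t₂ - τ) * g τ) volume t₁ t₂ :=
    conv_integrable kc hkb hgmeas hgb h1a h12 le_rfl h2b
  have I3 : IntervalIntegrable (fun τ => k (t₁ - τ) * g τ) volume 0 t₁ :=
    conv_integrable kc hkb hgmeas hgb le_rfl h1a le_rfl h1b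
  have hk_int : ∀ a b : ℝ, 0 ≤ a → a ≤ b → b ≤ T → IntervalIntegrable k volume a b := by
    intro a b ha hab hbT
    exact (kc.mono (by rw [Set.uIcc_of_le hab]; exact Set.Icc_subset_Icc ha hbT)).intervalIntegrable
  -- decomposition
  have hsplit : conv k g t₂ = (∫ τ in (0:ℝ)..t₁, k (t₂ - τ) * g τ) + ∫ τ in t₁..t₂, k (t₂ - τ) * g τ := by
    rw [conv, intervalIntegral.integral_add_adjacent_intervals I1 I2]
  have hA : (∫ τ in (0:ℝ)..t₁, k (t₂ - τ) * g τ) - conv k g t₁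
      = ∫ τ in (0:ℝ)..t₁, (k (t₂ - τ) - k (t₁ - τ)) * g τ := by
    rw [conv, ← intervalIntegral.integral_sub I1 I3]
    congr 1; ext τ; ring
  -- bound on B
  have hB : |∫ τ in t₁..t₂, k (t₂ - τ) * g τ| ≤ M * k 0 * (t₂ - t₁) := by
    have := intervalIntegral.norm_integral_le_of_norm_le_const (C := k 0 * M)
      (a := t₁) (b := t₂) (f := fun τ => k (t₂ - τ) * g τ) ?_
    · rw [Real.norm_eq_abs] at this
      calc |∫ τ in t₁..t₂, k (t₂ - τ) * g τ| ≤ k 0 * M * |t₂ - t₁| := this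
        _ = M * k 0 * (t₂ - t₁) := by rw [abs_of_nonneg (by linarith)]; ring
    · intro x hx
      rw [Set.uIoc_of_le h12] at hx
      have hx1 : x ∈ Set.Icc (0:ℝ) T := ⟨by linarith [hx.1], by linarith [hx.2]⟩
      have hx2 : t₂ - x ∈ Set.Icc (0:ℝ) T := ⟨by linarith [hx.2], by linarith [hx.1]⟩
      calc ‖k (t₂ - x) * g x‖ = |k (t₂ - x)| * |g x| := by rw [norm_mul]; rfl
        _ ≤ k 0 * M := mul_le_mul (hkb _ hx2) (hgb _ hx1) (abs_nonneg _) hk0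
  -- bound on A
  have c1 : ContinuousOn (fun τ => k (t₁ - τ)) (Set.uIcc 0 t₁) := by
    rw [Set.uIcc_of_le h1a]
    refine kc.comp ((continuous_const.sub continuous_id).continuousOn) ?_
    intro τ hτ; simp only [Set.mem_Icc] at hτ ⊢; constructor <;> linarith [hτ.1, hτ.2]
  have c2 : ContinuousOn (fun τ => k (t₂ - τ)) (Set.uIcc 0 t₁) := by
    rw [Set.uIcc_of_le h1a]
    refine kc.comp ((continuous_const.sub continuous_id).continuousOn) ?_
    intro τ hτ; simp only [Set.mem_Icc] at hτ ⊢; constructor <;> linarith [hτ.1, hτ.2]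
  have c1int : IntervalIntegrable (fun τ => k (t₁ - τ)) volume 0 t₁ := c1.intervalIntegrable
  have c2int : IntervalIntegrable (fun τ => k (t₂ - τ)) volume 0 t₁ := c2.intervalIntegrable
  have hkdiff_int : IntervalIntegrable (fun τ => M * (k (t₁ - τ) - k (t₂ - τ))) volume 0 t₁ :=
    (c1int.sub c2int).const_mul M
  have hAbd : |∫ τ in (0:ℝ)..t₁, (k (t₂ - τ) - k (t₁ - τ)) * g τ|
      ≤ M * ((∫ τ in (0:ℝ)..t₁, k (t₁ - τ)) - ∫ τ in (0:ℝ)..t₁, k (t₂ - τ)) := by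
    have habs := intervalIntegral.abs_integral_le_integral_abs (μ := volume) (a := 0) (b := t₁)
      (f := fun τ => (k (t₂ - τ) - k (t₁ - τ)) * g τ) h1a
    refine le_trans habs ?_
    have hint : IntervalIntegrable (fun τ => |(k (t₂ - τ) - k (t₁ - τ)) * g τ|) volume 0 t₁ := by
      refine IntervalIntegrable.abs ((I1.sub I3).congr ?_)
      intro τ _; dsimp only; ring
    have hmono := intervalIntegral.integral_mono_on (μ := volume) (a := 0) (b := t₁)
      (f := fun τ => |(k (t₂ - τ) - k (t₁ - τ)) * g τ|)
      (g := fun τ => M * (k (t₁ - τ) - k (t₂ - τ))) h1a hint hkdiff_int ?_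
    · refine le_trans hmono (le_of_eq ?_)
      rw [intervalIntegral.integral_const_mul, intervalIntegral.integral_sub c1int c2int]
    · intro τ hτ
      show |(k (t₂ - τ) - k (t₁ - τ)) * g τ| ≤ M * (k (t₁ - τ) - k (t₂ - τ))
      have hτ1 : t₁ - τ ∈ Set.Icc (0:ℝ) T := ⟨by linarith [hτ.2], by linarith [hτ.1]⟩
      have hτ2 : t₂ - τ ∈ Set.Icc (0:ℝ) T := ⟨by linarith [hτ.2], by linarith [hτ.1]⟩
      have hτ3 : τ ∈ Set.Icc (0:ℝ) T := ⟨hτ.1, by linarith [hτ.2]⟩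
      have hkle : k (t₂ - τ) ≤ k (t₁ - τ) := hkmono hτ1 hτ2 (by linarith)
      rw [abs_mul, abs_of_nonpos (by linarith : k (t₂ - τ) - k (t₁ - τ) ≤ 0)]
      have : (k (t₁ - τ) - k (t₂ - τ)) * |g τ| ≤ (k (t₁ - τ) - k (t₂ - τ)) * M :=
        mul_le_mul_of_nonneg_left (hgb _ hτ3) (by linarith)
      nlinarith [this]
  -- the kernel integral difference bound
  have hkint_bd : (∫ τ in (0:ℝ)..t₁, k (t₁ - τ)) - (∫ τ in (0:ℝ)..t₁, k (t₂ - τ)) ≤ k 0 * (t₂ - t₁) := by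
    rw [intervalIntegral.integral_comp_sub_left (fun u => k u) t₁,
      intervalIntegral.integral_comp_sub_left (fun u => k u) t₂]
    simp only [sub_self, sub_zero]
    have e1 : (∫ u in (0:ℝ)..t₁, k u) + (∫ u in t₁..t₂, k u) = ∫ u in (0:ℝ)..t₂, k u :=
      intervalIntegral.integral_add_adjacent_intervals (hk_int 0 t₁ le_rfl h1a h1b)
        (hk_int t₁ t₂ h1a h12 h2b)
    have e2 : (∫ u in (0:ℝ)..(t₂ - t₁), k u) + (∫ u in (t₂ - t₁)..t₂, k u) = ∫ u in (0:ℝ)..t₂, k u :=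
      intervalIntegral.integral_add_adjacent_intervals
        (hk_int 0 (t₂ - t₁) le_rfl (by linarith) (by linarith))
        (hk_int (t₂ - t₁) t₂ (by linarith) (by linarith) h2b)
    have e3 : (0:ℝ) ≤ ∫ u in t₁..t₂, k u := by
      refine intervalIntegral.integral_nonneg h12 (fun u hu => hknn u ⟨by linarith [hu.1], by linarith [hu.2]⟩)
    have e4 : (∫ u in (0:ℝ)..(t₂ - t₁), k u) ≤ k 0 * (t₂ - t₁) := by
      have := intervalIntegral.integral_mono_on (μ := volume) (a := 0) (b := t₂ - t₁)
        (f := k) (g := fun _ => k 0) (by linarith)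
        (hk_int 0 (t₂ - t₁) le_rfl (by linarith) (by linarith)) intervalIntegrable_const ?_
      · simpa [mul_comm] using this
      · intro u hu
        exact hkmono (Set.left_mem_Icc.2 hT) ⟨hu.1, by linarith [hu.2]⟩ hu.1
    linarith
  -- conclude
  have key : conv k g t₂ - conv k g t₁
      = (∫ τ in (0:ℝ)..t₁, (k (t₂ - τ) - k (t₁ - τ)) * g τ) + ∫ τ in t₁..t₂, k (t₂ - τ) * g τ := by
    rw [hsplit, ← hA]; ring
  rw [key]
  have := abs_add_le (∫ τ in (0:ℝ)..t₁, (k (t₂ - τ) - k (t₁ - τ)) * g τ)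
    (∫ τ in t₁..t₂, k (t₂ - τ) * g τ)
  have hA2 : |∫ τ in (0:ℝ)..t₁, (k (t₂ - τ) - k (t₁ - τ)) * g τ| ≤ M * (k 0 * (t₂ - t₁)) :=
    le_trans hAbd (mul_le_mul_of_nonneg_left hkint_bd hM)
  calc |(∫ τ in (0:ℝ)..t₁, (k (t₂ - τ) - k (t₁ - τ)) * g τ) + ∫ τ in t₁..t₂, k (t₂ - τ) * g τ|
      ≤ M * (k 0 * (t₂ - t₁)) + M * k 0 * (t₂ - t₁) := le_trans this (add_le_add hA2 hB)
    _ = 2 * M * k 0 * (t₂ - t₁) := by ring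

open Set Filter in
lemma antitoneOn_deriv_nonpos' {f : ℝ → ℝ} {s : Set ℝ} {x : ℝ}
    (hf : AntitoneOn f s) (hs : s ∈ nhds x) (hd : DifferentiableAt ℝ f x) :
    deriv f x ≤ 0 := by
  have hx : x ∈ s := mem_of_mem_nhds hs
  have h := hd.hasDerivAt
  rw [hasDerivAt_iff_tendsto_slope] at h
  have h' : Tendsto (slope f x) (nhdsWithin x (Set.Ioi x)) (nhds (deriv f x)) :=
    h.mono_left (nhdsWithin_mono x (by intro y hy; exact ne_of_gt hy))
  refine le_of_tendsto h' ?_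
  have hmem : s ∩ Set.Ioi x ∈ nhdsWithin x (Set.Ioi x) :=
    inter_mem (mem_nhdsWithin_of_mem_nhds hs) self_mem_nhdsWithin
  filter_upwards [hmem] with y hy
  rw [slope_def_field]
  have h1 : f y ≤ f x := hf hx hy.1 (le_of_lt hy.2)
  have h2 : (0:ℝ) < y - x := sub_pos.2 hy.2
  exact div_nonpos_of_nonpos_of_nonneg (by linarith) (le_of_lt h2)

open Set Filter in
/-- Time-shift property of the nonlocal derivative for nonincreasing kernels. -/
theorem time_shift_property
    (T : ℝ) (hT : 0 < T)
    (k k' : ℝ → ℝ)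
    (hk' : IntegrableOn k' (Set.Icc 0 T))
    (hkAC : ∀ t ∈ Set.Icc (0:ℝ) T, k t = k 0 + ∫ τ in (0:ℝ)..t, k' τ)
    (hknn : ∀ t ∈ Set.Icc (0:ℝ) T, 0 ≤ k t)
    (hkmono : AntitoneOn k (Set.Icc 0 T))
    (δ₁ : ℝ) (hδ₁ : δ₁ ∈ Set.Ioo 0 T)
    (W₀ : ℝ) (W : ℝ → ℝ) (hWmeas : Measurable W)
    (hWbd : ∃ M : ℝ, ∀ t ∈ Set.Icc (0:ℝ) T, |W t| ≤ M)
    (hWlower : ∀ᵐ t ∂(volume.restrict (Set.Ioo (0:ℝ) δ₁)), W₀ ≤ W t) :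
    ∀ᵐ s ∂(volume.restrict (Set.Ioo (0:ℝ) (T - δ₁))),
      deriv (conv k (fun τ => W τ - W₀)) (s + δ₁) ≤
        deriv (conv k (fun σ => W (σ + δ₁) - W₀)) s := by
  obtain ⟨M, hM⟩ := hWbd
  obtain ⟨hδ0, hδT⟩ := hδ₁
  set T' := T - δ₁ with hT'def
  have hT'pos : 0 < T' := by rw [hT'def]; linarith
  set g : ℝ → ℝ := fun τ => W τ - W₀ with hgdef
  have hgmeas : Measurable g := hWmeas.sub measurable_const
  set M' := M + |W₀| with hM'def
  have hMnn : 0 ≤ M := le_trans (abs_nonneg _) (hM 0 ⟨le_rfl, hT.le⟩)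
  have hM'0 : 0 ≤ M' := by rw [hM'def]; positivity
  have hgb : ∀ t ∈ Set.Icc (0:ℝ) T, |g t| ≤ M' := by
    intro t ht
    show |W t - W₀| ≤ M'
    rw [sub_eq_add_neg, hM'def]
    refine le_trans (abs_add_le _ _) ?_
    rw [abs_neg]
    linarith [hM t ht]
  -- continuity of k on [0,T]
  have kc : ContinuousOn k (Set.Icc 0 T) := by
    have hprim : ContinuousOn (fun t => k 0 + ∫ τ in (0:ℝ)..t, k' τ) (Set.Icc 0 T) := by
      refine continuousOn_const.add ?_
      have h2 := intervalIntegral.continuousOn_primitive_interval (a := 0) (b := T)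
        (μ := volume) (f := k') (by rwa [Set.uIcc_of_le hT.le])
      rwa [Set.uIcc_of_le hT.le] at h2
    exact hprim.congr fun t ht => hkAC t ht
  have hk0 : 0 ≤ k 0 := hknn 0 ⟨le_rfl, hT.le⟩
  have hkb : ∀ t ∈ Set.Icc (0:ℝ) T, |k t| ≤ k 0 := fun t ht => by
    rw [abs_of_nonneg (hknn t ht)]; exact hkmono ⟨le_rfl, hT.le⟩ ht ht.1
  have hsub : Set.Icc (0:ℝ) T' ⊆ Set.Icc 0 T := Set.Icc_subset_Icc le_rfl (by linarith)
  -- shifted data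
  set gδ : ℝ → ℝ := fun σ => g (σ + δ₁) with hgδdef
  have hgδmeas : Measurable gδ := hgmeas.comp (measurable_add_const δ₁)
  have hgδb : ∀ t ∈ Set.Icc (0:ℝ) T', |gδ t| ≤ M' := fun t ht =>
    hgb (t + δ₁) ⟨by linarith [ht.1], by linarith [ht.2]⟩
  -- Lipschitz constants
  set C : NNReal := (2 * M' * k 0).toNNReal with hCdef
  have hCcoe : (C : ℝ) = 2 * M' * k 0 := Real.coe_toNNReal _ (by positivity)
  have lip_of_bound : ∀ (f : ℝ → ℝ) (T₀ : ℝ),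
      (∀ t₁ ∈ Set.Icc (0:ℝ) T₀, ∀ t₂ ∈ Set.Icc (0:ℝ) T₀, t₁ ≤ t₂ →
        |f t₂ - f t₁| ≤ 2 * M' * k 0 * (t₂ - t₁)) → LipschitzOnWith C f (Set.Icc 0 T₀) := by
    intro f T₀ hf
    rw [lipschitzOnWith_iff_dist_le_mul]
    intro x hx y hy
    rw [Real.dist_eq, Real.dist_eq, hCcoe]
    rcases le_total y x with h | h
    · have := hf y hy x hx h
      rw [abs_of_nonneg (by linarith : (0:ℝ) ≤ x - y)]
      linarith [this]
    · have := hf x hx y hy h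
      rw [abs_sub_comm x y, abs_of_nonneg (by linarith : (0:ℝ) ≤ y - x),
        abs_sub_comm (f x) (f y)]
      linarith [this]
  have hFlip : LipschitzOnWith C (conv k g) (Set.Icc 0 T) :=
    lip_of_bound _ T fun t₁ h1 t₂ h2 h12 => conv_lip kc hknn hkmono hgmeas hM'0 hgb h1 h2 h12
  have hGlip : LipschitzOnWith C (conv k gδ) (Set.Icc 0 T') :=
    lip_of_bound _ T' fun t₁ h1 t₂ h2 h12 =>
      conv_lip (kc.mono hsub) (fun t ht => hknn t (hsub ht)) (hkmono.mono hsub)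
        hgδmeas hM'0 hgδb h1 h2 h12
  obtain ⟨Fh, hFhlip, hFheq⟩ := hFlip.extend_real
  obtain ⟨Gh, hGhlip, hGheq⟩ := hGlip.extend_real
  -- the decomposition identity
  set H : ℝ → ℝ := fun s => ∫ τ in (0:ℝ)..δ₁, k (s + δ₁ - τ) * g τ with hHdef
  have key : ∀ s ∈ Set.Icc (0:ℝ) T', conv k g (s + δ₁) = conv k gδ s + H s := by
    intro s hs
    obtain ⟨hs0, hsT⟩ := hs
    have hsT2 : s + δ₁ ≤ T := by rw [hT'def] at hsT; linarith
    have hI1 : IntervalIntegrable (fun τ => k (s + δ₁ - τ) * g τ) volume 0 δ₁ :=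
      conv_integrable kc hkb hgmeas hgb le_rfl hδ0.le (by linarith) hsT2
    have hI2 : IntervalIntegrable (fun τ => k (s + δ₁ - τ) * g τ) volume δ₁ (s + δ₁) :=
      conv_integrable kc hkb hgmeas hgb hδ0.le (by linarith) le_rfl hsT2
    have hsplit : conv k g (s + δ₁) = (∫ τ in (0:ℝ)..δ₁, k (s + δ₁ - τ) * g τ)
        + ∫ τ in δ₁..(s + δ₁), k (s + δ₁ - τ) * g τ := by
      rw [show conv k g (s + δ₁) = ∫ τ in (0:ℝ)..(s + δ₁), k (s + δ₁ - τ) * g τ from rfl,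
        intervalIntegral.integral_add_adjacent_intervals hI1 hI2]
    have hshift : (∫ τ in δ₁..(s + δ₁), k (s + δ₁ - τ) * g τ) = conv k gδ s := by
      have h3 := intervalIntegral.integral_comp_add_right (a := 0) (b := s)
        (f := fun τ => k (s + δ₁ - τ) * g τ) δ₁
      rw [zero_add] at h3
      rw [← h3, show conv k gδ s = ∫ σ in (0:ℝ)..s, k (s - σ) * gδ σ from rfl]
      refine intervalIntegral.integral_congr fun x hx => ?_
      show k (s + δ₁ - (x + δ₁)) * g (x + δ₁) = k (s - x) * gδ x
      rw [hgδdef]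
      ring_nf
    rw [hsplit, hshift]
    exact add_comm _ _
  -- H is antitone
  have hHanti : AntitoneOn H (Set.Icc 0 T') := by
    intro s₁ hs₁ s₂ hs₂ h12
    have h1T : s₁ + δ₁ ≤ T := by have := hs₁.2; rw [hT'def] at this; linarith
    have h2T : s₂ + δ₁ ≤ T := by have := hs₂.2; rw [hT'def] at this; linarith
    have hI1 : IntervalIntegrable (fun τ => k (s₁ + δ₁ - τ) * g τ) volume 0 δ₁ :=
      conv_integrable kc hkb hgmeas hgb le_rfl hδ0.le (by linarith [hs₁.1]) h1T
    have hI2 : IntervalIntegrable (fun τ => k (s₂ + δ₁ - τ) * g τ) volume 0 δ₁ :=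
      conv_integrable kc hkb hgmeas hgb le_rfl hδ0.le (by linarith [hs₂.1]) h2T
    show (∫ τ in (0:ℝ)..δ₁, k (s₂ + δ₁ - τ) * g τ) ≤ ∫ τ in (0:ℝ)..δ₁, k (s₁ + δ₁ - τ) * g τ
    refine intervalIntegral.integral_mono_ae_restrict hδ0.le hI2 hI1 ?_
    have hres : volume.restrict (Set.Icc (0:ℝ) δ₁) = volume.restrict (Set.Ioo (0:ℝ) δ₁) :=
      (Measure.restrict_congr_set Ioo_ae_eq_Icc).symm
    rw [hres]
    filter_upwards [hWlower, ae_restrict_mem measurableSet_Ioo] with τ hWτ hτ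
    have hg0 : 0 ≤ g τ := by show 0 ≤ W τ - W₀; linarith
    have hm1 : s₁ + δ₁ - τ ∈ Set.Icc (0:ℝ) T :=
      ⟨by linarith [hs₁.1, hτ.2], by linarith [hτ.1]⟩
    have hm2 : s₂ + δ₁ - τ ∈ Set.Icc (0:ℝ) T :=
      ⟨by linarith [hs₂.1, hτ.2], by linarith [hτ.1]⟩
    exact mul_le_mul_of_nonneg_right (hkmono hm1 hm2 (by linarith)) hg0
  -- a.e. differentiability
  have h1 : ∀ᵐ x ∂(volume : Measure ℝ), DifferentiableAt ℝ Fh x := hFhlip.ae_differentiableAt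
  have h2 : ∀ᵐ s ∂(volume : Measure ℝ), DifferentiableAt ℝ Fh (s + δ₁) := by
    rw [← map_add_right_ae volume δ₁, Filter.eventually_map] at h1
    exact h1
  have h3 : ∀ᵐ x ∂(volume : Measure ℝ), DifferentiableAt ℝ Gh x := hGhlip.ae_differentiableAt
  filter_upwards [ae_restrict_of_ae h2, ae_restrict_of_ae h3,
    ae_restrict_mem measurableSet_Ioo] with s hdF hdG hs
  obtain ⟨hs0, hsT'⟩ := hs
  have hsδ0 : (0:ℝ) < s + δ₁ := by linarith
  have hsδT : s + δ₁ < T := by rw [hT'def] at hsT'; linarith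
  -- local equalities
  have hnhd1 : Set.Ioo (0:ℝ) T ∈ nhds (s + δ₁) := Ioo_mem_nhds hsδ0 hsδT
  have hFeq : conv k g =ᶠ[nhds (s + δ₁)] Fh :=
    Filter.eventuallyEq_of_mem hnhd1 fun x hx => hFheq (Set.Ioo_subset_Icc_self hx)
  have hnhd2 : Set.Ioo (0:ℝ) T' ∈ nhds s := Ioo_mem_nhds hs0 hsT'
  have hGeq : conv k gδ =ᶠ[nhds s] Gh :=
    Filter.eventuallyEq_of_mem hnhd2 fun x hx => hGheq (Set.Ioo_subset_Icc_self hx)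
  have hHeq : H =ᶠ[nhds s] fun s' => Fh (s' + δ₁) - Gh s' := by
    filter_upwards [hnhd2] with x hx
    have hx' : x ∈ Set.Icc (0:ℝ) T' := Set.Ioo_subset_Icc_self hx
    have e1 : Fh (x + δ₁) = conv k g (x + δ₁) :=
      (hFheq ⟨by linarith [hx.1], by have := hx.2; rw [hT'def] at this; linarith⟩).symm
    have e2 : Gh x = conv k gδ x := (hGheq hx').symm
    rw [e1, e2]
    linarith [key x hx']
  have hd : HasDerivAt (fun s' => Fh (s' + δ₁) - Gh s') (deriv Fh (s + δ₁) - deriv Gh s) s :=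
    (hdF.hasDerivAt.comp_add_const s δ₁).sub hdG.hasDerivAt
  have hdH : HasDerivAt H (deriv Fh (s + δ₁) - deriv Gh s) s := hd.congr_of_eventuallyEq hHeq
  have hHderiv : deriv H s = deriv Fh (s + δ₁) - deriv Gh s := hdH.deriv
  have hle : deriv H s ≤ 0 :=
    antitoneOn_deriv_nonpos' hHanti (Icc_mem_nhds hs0 hsT') hdH.differentiableAt
  have eF : deriv (conv k g) (s + δ₁) = deriv Fh (s + δ₁) := hFeq.deriv_eq
  have eG : deriv (conv k gδ) s = deriv Gh s := hGeq.deriv_eq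
  linarith [eF, eG, hHderiv, hle]
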